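/- Let R = (<₁, <₂, <₃) be a standard representation of a finite set V with |V| ≥ 4, with <ᵢ-maximum elements a₁, a₂, a₃, and let b be the <₁-maximum element of V \ {a₁}. Let w₋ be the <₂-largest neighbor of a₁ in Σ₂(R) satisfying w₋ <₂ b, and let w₊ be the <₂-smallest neighbor of a₁ in Σ₂(R) satisfying b <₂ w₊ (both exist). Then the set of common neighbors of a₁ and b in Σ₂(R) is exactly {w₋, w₊}; in particular a₁ and b have exactly two common neighbors. -/

import Mathlib

open SimpleGraph

variable {V : Type*}

/-- The graph Σ₂(R) for a triple of linear orders R = (l₁, l₂, l₃) on V: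
`x` and `y` are adjacent iff every other vertex `z` lies above both `x` and `y`
in one of the three orders. -/
def Sigma2 (l₁ l₂ l₃ : LinearOrder V) : SimpleGraph V where
  Adj x y := x ≠ y ∧ ∀ z, z ≠ x → z ≠ y →
    (l₁.lt x z ∧ l₁.lt y z) ∨ (l₂.lt x z ∧ l₂.lt y z) ∨ (l₃.lt x z ∧ l₃.lt y z)
  symm := ⟨by
    rintro x y ⟨hxy, h⟩
    exact ⟨hxy.symm, fun z hzy hzx => by rcases h z hzx hzy with h|h|h <;> tauto⟩⟩
  loopless := ⟨fun x h => h.1 rfl⟩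

/-- The three orders have empty intersection: for distinct x, y, some order has x below y. -/
def IsRep (l₁ l₂ l₃ : LinearOrder V) : Prop :=
  ∀ x y : V, x ≠ y → l₁.lt x y ∨ l₂.lt x y ∨ l₃.lt x y

/-- `a` is the maximum element of the linear order `l`. -/
def IsMaxOf (l : LinearOrder V) (a : V) : Prop := ∀ x, x ≠ a → l.lt x a

/-- `a` is among the two smallest elements of `l`: at most one element lies below `a`. -/
def AmongTwoSmallest (l : LinearOrder V) (a : V) : Prop :=
  ∀ x y, l.lt x a → l.lt y a → x = y

/-- `R = (l₁, l₂, l₃)` is a standard representation with `<ᵢ`-maxima `a₁, a₂, a₃`. -/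
structure IsStdRep (l₁ l₂ l₃ : LinearOrder V) (a₁ a₂ a₃ : V) : Prop where
  rep : IsRep l₁ l₂ l₃
  top₁ : IsMaxOf l₁ a₁
  top₂ : IsMaxOf l₂ a₂
  top₃ : IsMaxOf l₃ a₃
  a₁_small₂ : AmongTwoSmallest l₂ a₁
  a₁_small₃ : AmongTwoSmallest l₃ a₁
  a₂_small₁ : AmongTwoSmallest l₁ a₂
  a₂_small₃ : AmongTwoSmallest l₃ a₂
  a₃_small₁ : AmongTwoSmallest l₁ a₃
  a₃_small₂ : AmongTwoSmallest l₂ a₃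

/-- The restriction of a linear order on `V` to `V \ {b}`. -/
def restrictOrder (l : LinearOrder V) (b : V) : LinearOrder {x : V // x ≠ b} :=
  @LinearOrder.lift' _ _ l Subtype.val Subtype.val_injective

/-- With b the <₁-maximum of V \ {a₁}, the <₂-largest neighbor wlo of a₁
below b and the <₂-smallest neighbor whi of a₁ above b both exist, and the common
neighbors of a₁ and b in Σ₂(R) are exactly {wlo, whi}; in particular there are exactly
two of them. -/

lemma lo_trans (l : LinearOrder V) {x y z : V} (h : l.lt x y) (h' : l.lt y z) : l.lt x z := by
  letI := l; exact lt_trans h h'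

lemma lo_asymm (l : LinearOrder V) {x y : V} (h : l.lt x y) : ¬ l.lt y x := by
  letI := l; exact lt_asymm h

lemma lo_ne (l : LinearOrder V) {x y : V} (h : l.lt x y) : x ≠ y := by
  letI := l; exact ne_of_lt h

lemma lo_total (l : LinearOrder V) {x y : V} (h : x ≠ y) : l.lt x y ∨ l.lt y x := by
  letI := l; exact h.lt_or_gt

lemma lo_exists_max [Fintype V] (l : LinearOrder V) (P : V → Prop) (h : ∃ x, P x) :
    ∃ m, P m ∧ ∀ x, P x → x ≠ m → l.lt x m := by
  classical
  letI := l
  obtain ⟨x, hx⟩ := h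
  have hs : (Finset.univ.filter P).Nonempty := ⟨x, by simp [hx]⟩
  refine ⟨(Finset.univ.filter P).max' hs, by simpa using (Finset.univ.filter P).max'_mem hs, ?_⟩
  intro y hy hne
  exact lt_of_le_of_ne (Finset.le_max' _ y (by simp [hy])) hne

lemma lo_exists_min [Fintype V] (l : LinearOrder V) (P : V → Prop) (h : ∃ x, P x) :
    ∃ m, P m ∧ ∀ x, P x → x ≠ m → l.lt m x := by
  classical
  letI := l
  obtain ⟨x, hx⟩ := h
  have hs : (Finset.univ.filter P).Nonempty := ⟨x, by simp [hx]⟩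
  refine ⟨(Finset.univ.filter P).min' hs, by simpa using (Finset.univ.filter P).min'_mem hs, ?_⟩
  intro y hy hne
  exact lt_of_le_of_ne (Finset.min'_le _ y (by simp [hy])) hne.symm

theorem stmt6 {V : Type*} [Fintype V] (hV : 4 ≤ Fintype.card V)
    (l₁ l₂ l₃ : LinearOrder V) (a₁ a₂ a₃ : V)
    (hR : IsStdRep l₁ l₂ l₃ a₁ a₂ a₃)
    (b : V) (hba : b ≠ a₁) (hb : ∀ x, x ≠ a₁ → x ≠ b → l₁.lt x b) :
    ∃ wlo whi : V,
      ((Sigma2 l₁ l₂ l₃).Adj a₁ wlo ∧ l₂.lt wlo b ∧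
        ∀ w, (Sigma2 l₁ l₂ l₃).Adj a₁ w → l₂.lt w b → w ≠ wlo → l₂.lt w wlo) ∧
      ((Sigma2 l₁ l₂ l₃).Adj a₁ whi ∧ l₂.lt b whi ∧
        ∀ w, (Sigma2 l₁ l₂ l₃).Adj a₁ w → l₂.lt b w → w ≠ whi → l₂.lt whi w) ∧
      wlo ≠ whi ∧
      ∀ z : V, ((Sigma2 l₁ l₂ l₃).Adj a₁ z ∧ (Sigma2 l₁ l₂ l₃).Adj b z) ↔
        (z = wlo ∨ z = whi) := by
  classical
  obtain ⟨rep, top₁, top₂, top₃, a1s₂, a1s₃, a2s₁, a2s₃, a3s₁, a3s₂⟩ := hR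
  have adj_iff : ∀ x y : V, (Sigma2 l₁ l₂ l₃).Adj x y ↔ (x ≠ y ∧ ∀ z, z ≠ x → z ≠ y →
      (l₁.lt x z ∧ l₁.lt y z) ∨ (l₂.lt x z ∧ l₂.lt y z) ∨ (l₃.lt x z ∧ l₃.lt y z)) :=
    fun _ _ => Iff.rfl
  -- two distinct elements outside {a₁, b}
  have h2 : ∃ x y : V, x ≠ y ∧ x ≠ a₁ ∧ x ≠ b ∧ y ≠ a₁ ∧ y ≠ b := by
    have hc1 : (Finset.univ \ {a₁, b} : Finset V).card
        = Fintype.card V - ({a₁, b} : Finset V).card := by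
      rw [Finset.card_sdiff_of_subset (Finset.subset_univ _), Finset.card_univ]
    have hc2 : ({a₁, b} : Finset V).card ≤ 2 :=
      (Finset.card_insert_le _ _).trans (by simp)
    have hcard : 1 < (Finset.univ \ {a₁, b} : Finset V).card := by omega
    obtain ⟨x, hx, y, hy, hxy⟩ := Finset.one_lt_card.mp hcard
    simp only [Finset.mem_sdiff, Finset.mem_univ, Finset.mem_insert, Finset.mem_singleton,
      true_and, not_or] at hx hy
    exact ⟨x, y, hxy, hx.1, hx.2, hy.1, hy.2⟩
  obtain ⟨x₀, y₀, hxy0, hx0a, hx0b, hy0a, hy0b⟩ := h2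
  have ha₂a₁ : a₂ ≠ a₁ := by
    intro h
    have hx := top₂ x₀ (by rw [h]; exact hx0a)
    have hy := top₂ y₀ (by rw [h]; exact hy0a)
    rw [h] at hx hy
    exact hxy0 (a1s₂ x₀ y₀ hx hy)
  have ha₃a₁ : a₃ ≠ a₁ := by
    intro h
    have hx := top₃ x₀ (by rw [h]; exact hx0a)
    have hy := top₃ y₀ (by rw [h]; exact hy0a)
    rw [h] at hx hy
    exact hxy0 (a1s₃ x₀ y₀ hx hy)
  have hba₂ : b ≠ a₂ := by
    intro h
    have hx := hb x₀ hx0a hx0b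
    have hy := hb y₀ hy0a hy0b
    rw [h] at hx hy
    exact hxy0 (a2s₁ x₀ y₀ hx hy)
  have hba₃ : b ≠ a₃ := by
    intro h
    have hx := hb x₀ hx0a hx0b
    have hy := hb y₀ hy0a hy0b
    rw [h] at hx hy
    exact hxy0 (a3s₁ x₀ y₀ hx hy)
  have hab2 : l₂.lt a₁ b := by
    rcases lo_total l₂ (Ne.symm hba) with h | h
    · exact h
    · exfalso
      have h13 : l₂.lt a₁ a₃ := by
        rcases lo_total l₂ (Ne.symm ha₃a₁) with h' | h'
        · exact h'
        · exact absurd (a1s₂ b a₃ h h') hba₃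
      exact hba (a3s₂ b a₁ (lo_trans l₂ h h13) h13)
  have hab3 : l₃.lt a₁ b := by
    rcases lo_total l₃ (Ne.symm hba) with h | h
    · exact h
    · exfalso
      have h12 : l₃.lt a₁ a₂ := by
        rcases lo_total l₃ (Ne.symm ha₂a₁) with h' | h'
        · exact h'
        · exact absurd (a1s₃ b a₂ h h') hba₂
      exact hba (a2s₃ b a₁ (lo_trans l₃ h h12) h12)
  have hexlo : ∃ x, x ≠ a₁ ∧ l₂.lt x b := by
    by_contra hc
    have hc' : ∀ x, x ≠ a₁ → ¬ l₂.lt x b := fun x hx hlt => hc ⟨x, hx, hlt⟩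
    have h3 : l₂.lt b a₃ := by
      rcases lo_total l₂ hba₃ with h | h
      · exact h
      · exact absurd h (hc' a₃ ha₃a₁)
    exact hba (a3s₂ a₁ b (lo_trans l₂ hab2 h3) h3).symm
  have hexhi : ∃ x, x ≠ a₁ ∧ l₃.lt x b := by
    by_contra hc
    have hc' : ∀ x, x ≠ a₁ → ¬ l₃.lt x b := fun x hx hlt => hc ⟨x, hx, hlt⟩
    have h3 : l₃.lt b a₂ := by
      rcases lo_total l₃ hba₂ with h | h
      · exact h
      · exact absurd h (hc' a₂ ha₂a₁)
    exact hba (a2s₃ a₁ b (lo_trans l₃ hab3 h3) h3).symm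
  -- adjacency to a₁ ↔ (2,3)-minimality
  have adjA : ∀ w, (Sigma2 l₁ l₂ l₃).Adj a₁ w ↔
      (w ≠ a₁ ∧ ∀ z, z ≠ a₁ → z ≠ w → ¬(l₂.lt z w ∧ l₃.lt z w)) := by
    intro w
    rw [adj_iff]
    constructor
    · rintro ⟨hne, h⟩
      refine ⟨Ne.symm hne, fun z hz hzw hzz => ?_⟩
      obtain ⟨h2, h3⟩ := hzz
      rcases h z hz hzw with ⟨h1a, _⟩ | ⟨_, hw2⟩ | ⟨_, hw3⟩
      · exact lo_asymm l₁ (top₁ z hz) h1a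
      · exact lo_asymm l₂ h2 hw2
      · exact lo_asymm l₃ h3 hw3
    · rintro ⟨hne, hmin⟩
      refine ⟨Ne.symm hne, fun z hz hzw => ?_⟩
      rcases lo_total l₂ (Ne.symm hzw) with h2 | h2
      · rcases lo_total l₃ (Ne.symm hzw) with h3 | h3
        · rcases rep a₁ z (Ne.symm hz) with h1 | hA | hA
          · exact absurd h1 (lo_asymm l₁ (top₁ z hz))
          · exact Or.inr (Or.inl ⟨hA, h2⟩)
          · exact Or.inr (Or.inr ⟨hA, h3⟩)
        · have ha : l₂.lt a₁ z := by
            rcases lo_total l₂ (Ne.symm hz) with h | h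
            · exact h
            · exfalso
              have haw : l₂.lt a₁ w := by
                rcases lo_total l₂ (Ne.symm hne) with h' | h'
                · exact h'
                · exact absurd (a1s₂ z w h h') hzw
              exact hmin z hz hzw ⟨lo_trans l₂ h haw, h3⟩
          exact Or.inr (Or.inl ⟨ha, h2⟩)
      · rcases lo_total l₃ (Ne.symm hzw) with h3 | h3
        · have ha : l₃.lt a₁ z := by
            rcases lo_total l₃ (Ne.symm hz) with h | h
            · exact h
            · exfalso
              have haw : l₃.lt a₁ w := by
                rcases lo_total l₃ (Ne.symm hne) with h' | h'
                · exact h'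
                · exact absurd (a1s₃ z w h h') hzw
              exact hmin z hz hzw ⟨h2, lo_trans l₃ h haw⟩
          exact Or.inr (Or.inr ⟨ha, h3⟩)
        · exact absurd ⟨h2, h3⟩ (hmin z hz hzw)
  -- b is (2,3)-minimal
  have hMnb : ∀ z, z ≠ a₁ → z ≠ b → ¬(l₂.lt z b ∧ l₃.lt z b) := by
    rintro z hz hzb ⟨h2, h3⟩
    rcases rep b z (Ne.symm hzb) with h1 | h | h
    · exact lo_asymm l₁ (hb z hz hzb) h1
    · exact lo_asymm l₂ h2 h
    · exact lo_asymm l₃ h3 h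
  -- descent to a minimal element
  have descend : ∀ n (x : V), (Finset.univ.filter (fun y => l₂.lt y x)).card ≤ n → x ≠ a₁ →
      ∃ m, m ≠ a₁ ∧ (∀ z, z ≠ a₁ → z ≠ m → ¬(l₂.lt z m ∧ l₃.lt z m)) ∧
        (m = x ∨ (l₂.lt m x ∧ l₃.lt m x)) := by
    intro n
    induction n with
    | zero =>
      intro x hcard hx
      refine ⟨x, hx, fun z hz hzx hzz => ?_, Or.inl rfl⟩
      obtain ⟨h2, _⟩ := hzz
      have hmem : z ∈ Finset.univ.filter (fun y => l₂.lt y x) := by simp [h2]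
      have := Finset.card_pos.mpr ⟨z, hmem⟩
      omega
    | succ n ih =>
      intro x hcard hx
      by_cases hmin : ∀ z, z ≠ a₁ → z ≠ x → ¬(l₂.lt z x ∧ l₃.lt z x)
      · exact ⟨x, hx, hmin, Or.inl rfl⟩
      · push_neg at hmin
        obtain ⟨z, hz, hzx, h2, h3⟩ := hmin
        have hsub : Finset.univ.filter (fun y => l₂.lt y z) ⊆
            (Finset.univ.filter (fun y => l₂.lt y x)).erase z := by
          intro y hy
          simp only [Finset.mem_filter, Finset.mem_univ, true_and] at hy
          exact Finset.mem_erase.mpr ⟨lo_ne l₂ hy, by simp [lo_trans l₂ hy h2]⟩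
        have hcard' : (Finset.univ.filter (fun y => l₂.lt y z)).card ≤ n := by
          have h1 := Finset.card_le_card hsub
          have h2m : z ∈ Finset.univ.filter (fun y => l₂.lt y x) := by simp [h2]
          have h3m := Finset.card_erase_of_mem h2m
          have h4m := Finset.card_pos.mpr ⟨z, h2m⟩
          omega
        obtain ⟨m, hm1, hm2', hm3⟩ := ih z hcard' hz
        refine ⟨m, hm1, hm2', Or.inr ?_⟩
        rcases hm3 with rfl | ⟨hm2'', hm3''⟩
        · exact ⟨h2, h3⟩
        · exact ⟨lo_trans l₂ hm2'' h2, lo_trans l₃ hm3'' h3⟩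
  have descend' : ∀ x, x ≠ a₁ →
      ∃ m, m ≠ a₁ ∧ (∀ z, z ≠ a₁ → z ≠ m → ¬(l₂.lt z m ∧ l₃.lt z m)) ∧
        (m = x ∨ (l₂.lt m x ∧ l₃.lt m x)) :=
    fun x hx => descend _ x le_rfl hx
  -- wlo
  have hPlo : ∃ w, (w ≠ a₁ ∧ (∀ z, z ≠ a₁ → z ≠ w → ¬(l₂.lt z w ∧ l₃.lt z w)) ∧ l₂.lt w b) := by
    obtain ⟨x, hx, hxb⟩ := hexlo
    obtain ⟨m, hm1, hm2, hm3⟩ := descend' x hx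
    refine ⟨m, hm1, hm2, ?_⟩
    rcases hm3 with rfl | ⟨h2, _⟩
    · exact hxb
    · exact lo_trans l₂ h2 hxb
  obtain ⟨wlo, ⟨hwlo1, hwlo2, hwlo3⟩, hwmax⟩ := lo_exists_max l₂ _ hPlo
  -- whi
  have hPhi : ∃ w, (w ≠ a₁ ∧ (∀ z, z ≠ a₁ → z ≠ w → ¬(l₂.lt z w ∧ l₃.lt z w)) ∧ l₂.lt b w) := by
    obtain ⟨x, hx, hxb⟩ := hexhi
    obtain ⟨m, hm1, hm2, hm3⟩ := descend' x hx
    have hm3b : l₃.lt m b := by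
      rcases hm3 with rfl | ⟨_, h3⟩
      · exact hxb
      · exact lo_trans l₃ h3 hxb
    have hbm : l₂.lt b m := by
      rcases lo_total l₂ (lo_ne l₃ hm3b) with h | h
      · exact absurd ⟨h, hm3b⟩ (hMnb m hm1 (lo_ne l₃ hm3b))
      · exact h
    exact ⟨m, hm1, hm2, hbm⟩
  obtain ⟨whi, ⟨hwhi1, hwhi2, hwhi3⟩, hwmin⟩ := lo_exists_min l₂ _ hPhi
  have hbwlo3 : l₃.lt b wlo := by
    rcases lo_total l₃ (lo_ne l₂ hwlo3) with h | h
    · exact absurd ⟨hwlo3, h⟩ (hMnb wlo hwlo1 (lo_ne l₂ hwlo3))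
    · exact h
  have hwhi3b : l₃.lt whi b := by
    rcases lo_total l₃ (lo_ne l₂ hwhi3).symm with h | h
    · exact h
    · exact absurd ⟨hwhi3, h⟩ (hwhi2 b hba (lo_ne l₂ hwhi3))
  -- b adjacent to wlo
  have hAdjbwlo : (Sigma2 l₁ l₂ l₃).Adj b wlo := by
    rw [adj_iff]
    refine ⟨(lo_ne l₂ hwlo3).symm, fun u hub huw => ?_⟩
    by_cases hua : u = a₁
    · subst hua
      exact Or.inl ⟨top₁ b hba, top₁ wlo hwlo1⟩
    · by_contra hcon
      have hc2 : ¬(l₂.lt b u ∧ l₂.lt wlo u) := fun h => hcon (Or.inr (Or.inl h))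
      have hc3 : ¬(l₃.lt b u ∧ l₃.lt wlo u) := fun h => hcon (Or.inr (Or.inr h))
      have hu2 : l₂.lt u b := by
        rcases lo_total l₂ hub with h | h
        · exact h
        · exact (hc2 ⟨h, lo_trans l₂ hwlo3 h⟩).elim
      have hu3 : l₃.lt u wlo := by
        rcases lo_total l₃ huw with h | h
        · exact h
        · exact (hc3 ⟨lo_trans l₃ hbwlo3 h, h⟩).elim
      obtain ⟨m, hm1, hm2, hm3⟩ := descend' u hua
      have hm2b : l₂.lt m b := by
        rcases hm3 with rfl | ⟨h, _⟩
        · exact hu2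
        · exact lo_trans l₂ h hu2
      have hm3w : l₃.lt m wlo := by
        rcases hm3 with rfl | ⟨_, h⟩
        · exact hu3
        · exact lo_trans l₃ h hu3
      have hmw : m ≠ wlo := lo_ne l₃ hm3w
      have hm2w : l₂.lt m wlo := hwmax m ⟨hm1, hm2, hm2b⟩ hmw
      exact hwlo2 m hm1 hmw ⟨hm2w, hm3w⟩
  -- b adjacent to whi
  have hAdjbwhi : (Sigma2 l₁ l₂ l₃).Adj b whi := by
    rw [adj_iff]
    refine ⟨lo_ne l₂ hwhi3, fun u hub huw => ?_⟩
    by_cases hua : u = a₁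
    · subst hua
      exact Or.inl ⟨top₁ b hba, top₁ whi hwhi1⟩
    · by_contra hcon
      have hc2 : ¬(l₂.lt b u ∧ l₂.lt whi u) := fun h => hcon (Or.inr (Or.inl h))
      have hc3 : ¬(l₃.lt b u ∧ l₃.lt whi u) := fun h => hcon (Or.inr (Or.inr h))
      have hu2 : l₂.lt u whi := by
        rcases lo_total l₂ huw with h | h
        · exact h
        · exact (hc2 ⟨lo_trans l₂ hwhi3 h, h⟩).elim
      have hu3 : l₃.lt u b := by
        rcases lo_total l₃ hub with h | h
        · exact h
        · exact (hc3 ⟨h, lo_trans l₃ hwhi3b h⟩).elim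
      obtain ⟨m, hm1, hm2, hm3⟩ := descend' u hua
      have hm2w : l₂.lt m whi := by
        rcases hm3 with rfl | ⟨h, _⟩
        · exact hu2
        · exact lo_trans l₂ h hu2
      have hm3b : l₃.lt m b := by
        rcases hm3 with rfl | ⟨_, h⟩
        · exact hu3
        · exact lo_trans l₃ h hu3
      have hmb : m ≠ b := lo_ne l₃ hm3b
      have hbm : l₂.lt b m := by
        rcases lo_total l₂ hmb with h | h
        · exact absurd ⟨h, hm3b⟩ (hMnb m hm1 hmb)
        · exact h
      exact lo_asymm l₂ hm2w (hwmin m ⟨hm1, hm2, hbm⟩ (lo_ne l₂ hm2w))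
  refine ⟨wlo, whi,
    ⟨(adjA wlo).mpr ⟨hwlo1, hwlo2⟩, hwlo3, ?_⟩,
    ⟨(adjA whi).mpr ⟨hwhi1, hwhi2⟩, hwhi3, ?_⟩, ?_, ?_⟩
  · intro w hw hlt hne
    obtain ⟨h1, h2⟩ := (adjA w).mp hw
    exact hwmax w ⟨h1, h2, hlt⟩ hne
  · intro w hw hlt hne
    obtain ⟨h1, h2⟩ := (adjA w).mp hw
    exact hwmin w ⟨h1, h2, hlt⟩ hne
  · exact lo_ne l₂ (lo_trans l₂ hwlo3 hwhi3)
  · intro z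
    constructor
    · rintro ⟨hza, hzb⟩
      obtain ⟨hz1, hz2⟩ := (adjA z).mp hza
      obtain ⟨hbz, hzb2⟩ := (adj_iff b z).mp hzb
      rcases lo_total l₂ (Ne.symm hbz) with hlo | hhi
      · refine Or.inl ?_
        by_contra hne
        have hzw : l₂.lt z wlo := hwmax z ⟨hz1, hz2, hlo⟩ hne
        rcases hzb2 wlo (lo_ne l₂ hwlo3) (lo_ne l₂ hzw).symm with ⟨h1, _⟩ | ⟨h1, _⟩ | ⟨_, h3⟩
        · exact lo_asymm l₁ (hb wlo hwlo1 (lo_ne l₂ hwlo3)) h1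
        · exact lo_asymm l₂ hwlo3 h1
        · exact hwlo2 z hz1 hne ⟨hzw, h3⟩
      · refine Or.inr ?_
        by_contra hne
        have hzw : l₂.lt whi z := hwmin z ⟨hz1, hz2, hhi⟩ hne
        rcases hzb2 whi (lo_ne l₂ hwhi3).symm (lo_ne l₂ hzw) with ⟨h1, _⟩ | ⟨_, h2⟩ | ⟨h3, _⟩
        · exact lo_asymm l₁ (hb whi hwhi1 (lo_ne l₂ hwhi3).symm) h1
        · exact lo_asymm l₂ hzw h2
        · exact lo_asymm l₃ hwhi3b h3
    · rintro (rfl | rfl)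
      · exact ⟨(adjA z).mpr ⟨hwlo1, hwlo2⟩, hAdjbwlo⟩
      · exact ⟨(adjA z).mpr ⟨hwhi1, hwhi2⟩, hAdjbwhi⟩
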